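/- For an index k of depth r ≥ 2 and non-negative integers u, u', the iterated shuffle-with-ones operation satisfies (k_u)_{u'} = C(u+u', u) · k_{u+u'}, where k_u := (k₁, ((k₂,…,k_{r-1}) ш {1}^u), k_r) as a formal linear combination of indices, extended linearly. -/
import Mathlib


/-- The naive shuffle of two tuples: formal sum of all interleavings. -/
noncomputable def shuf : List ℕ → List ℕ → (List ℕ →₀ ℤ)
  | [], l => Finsupp.single l 1
  | k, [] => Finsupp.single k 1
  | a :: k, b :: l =>
      (shuf k (b :: l)).mapDomain (a :: ·) + (shuf (a :: k) l).mapDomain (b :: ·)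
termination_by k l => k.length + l.length

/-- k_u := (k₁, ((k₂,…,k_{r-1}) ш {1}^u), k_r), as a formal sum of indices. -/
noncomputable def kU (k : List ℕ) (u : ℕ) : List ℕ →₀ ℤ :=
  (shuf (k.drop 1).dropLast (List.replicate u 1)).mapDomain
    (fun mid => k.headD 1 :: (mid ++ [k.getLastD 1]))

/-- Linear extension of `kU` to formal ℤ-linear combinations of indices. -/
noncomputable def kUExt (x : List ℕ →₀ ℤ) (u : ℕ) : List ℕ →₀ ℤ :=
  x.sum fun k c => c • kU k u

lemma shuf_nil_left (l : List ℕ) : shuf [] l = Finsupp.single l 1 := by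
  cases l <;> simp [shuf]

lemma shuf_nil_right (k : List ℕ) : shuf k [] = Finsupp.single k 1 := by
  cases k <;> simp [shuf]

lemma shuf_cons (a b : ℕ) (k l : List ℕ) :
    shuf (a :: k) (b :: l) =
      (shuf k (b :: l)).mapDomain (a :: ·) + (shuf (a :: k) l).mapDomain (b :: ·) := by
  rw [shuf]

/-- Linear extension of shuffling with `{1}^v`. -/
noncomputable def F (x : List ℕ →₀ ℤ) (v : ℕ) : List ℕ →₀ ℤ :=
  x.sum fun w c => c • shuf w (List.replicate v 1)

lemma F_add (x y : List ℕ →₀ ℤ) (v : ℕ) : F (x + y) v = F x v + F y v := by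
  unfold F
  exact Finsupp.sum_add_index' (by simp) (by intros; rw [add_smul])

lemma F_single (w : List ℕ) (c : ℤ) (v : ℕ) :
    F (Finsupp.single w c) v = c • shuf w (List.replicate v 1) := by
  unfold F; exact Finsupp.sum_single_index (by simp)

lemma cons_inj (c : ℕ) : Function.Injective (c :: · : List ℕ → List ℕ) := by
  intro x y h; simpa using h

lemma F_mapDomain (c : ℕ) (X : List ℕ →₀ ℤ) (v : ℕ) :
    F (Finsupp.mapDomain (c :: ·) X) v =
      X.sum fun w cc => cc • shuf (c :: w) (List.replicate v 1) := by
  unfold F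
  exact Finsupp.sum_mapDomain_index_inj (cons_inj c)

lemma mapDomain_Fsum (f : List ℕ → List ℕ) (X : List ℕ →₀ ℤ) (g : List ℕ → List ℕ →₀ ℤ) :
    Finsupp.mapDomain f (X.sum fun w cc => cc • g w) =
      X.sum fun w cc => cc • Finsupp.mapDomain f (g w) := by
  rw [Finsupp.mapDomain_sum]
  simp [Finsupp.mapDomain_smul]

lemma F_mapDomain_cons (c : ℕ) (X : List ℕ →₀ ℤ) (v : ℕ) :
    F (Finsupp.mapDomain (c :: ·) X) (v+1) =
      Finsupp.mapDomain (c :: ·) (F X (v+1)) +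
        Finsupp.mapDomain (1 :: ·) (F (Finsupp.mapDomain (c :: ·) X) v) := by
  rw [F_mapDomain, F_mapDomain]
  unfold F
  rw [mapDomain_Fsum, mapDomain_Fsum, ← Finsupp.sum_add]
  apply Finsupp.sum_congr
  intro w _
  rw [List.replicate_succ, shuf_cons, smul_add]

lemma F_zero_right (x : List ℕ →₀ ℤ) : F x 0 = x := by
  unfold F
  simp only [List.replicate_zero, shuf_nil_right, Finsupp.smul_single', mul_one]
  exact Finsupp.sum_single x

lemma F_shuf_cons (a : ℕ) (m : List ℕ) (u u' : ℕ) :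
    F (shuf (a :: m) (List.replicate (u+1) 1)) (u'+1) =
      Finsupp.mapDomain (a :: ·) (F (shuf m (List.replicate (u+1) 1)) (u'+1))
      + Finsupp.mapDomain (1 :: ·) (F (shuf (a :: m) (List.replicate u 1)) (u'+1))
      + Finsupp.mapDomain (1 :: ·) (F (shuf (a :: m) (List.replicate (u+1) 1)) u') := by
  conv_lhs => rw [List.replicate_succ, shuf_cons]
  rw [F_add, F_mapDomain_cons, F_mapDomain_cons, ← List.replicate_succ]
  have h : shuf (a :: m) (List.replicate (u+1) 1) =
      Finsupp.mapDomain (a :: ·) (shuf m (List.replicate (u+1) 1))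
      + Finsupp.mapDomain (1 :: ·) (shuf (a :: m) (List.replicate u 1)) := by
    conv_lhs => rw [List.replicate_succ, shuf_cons, ← List.replicate_succ]
  rw [add_add_add_comm, ← Finsupp.mapDomain_add, ← F_add, ← h]

theorem key : ∀ (m : List ℕ) (u u' : ℕ),
    F (shuf m (List.replicate u 1)) u' =
      ((u + u').choose u : ℤ) • shuf m (List.replicate (u + u') 1)
  | m, 0, u' => by
      simp [shuf_nil_right, F_single]
  | m, u+1, 0 => by
      rw [F_zero_right]; simp
  | [], u+1, u'+1 => by
      have h1 := key [] u (u'+1)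
      have h2 := key [] (u+1) u'
      rw [shuf_nil_left, F_single, one_smul, shuf_nil_left] at h1 h2
      rw [shuf_nil_left, F_single, one_smul, shuf_nil_left]
      conv_lhs => rw [List.replicate_succ, List.replicate_succ, shuf_cons,
        ← List.replicate_succ, ← List.replicate_succ]
      rw [h1, h2]
      simp only [Finsupp.mapDomain_smul, Finsupp.mapDomain_single]
      have e1 : u + 1 + (u' + 1) = (u + u' + 1) + 1 := by omega
      have e2 : u + (u' + 1) = u + u' + 1 := by omega
      have e3 : u + 1 + u' = u + u' + 1 := by omega
      rw [e1, e2, e3, ← List.replicate_succ, ← add_smul]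
      congr 1
  | a::m, u+1, u'+1 => by
      rw [F_shuf_cons, key m (u+1) (u'+1), key (a::m) u (u'+1), key (a::m) (u+1) u']
      simp only [Finsupp.mapDomain_smul]
      have e1 : u + 1 + (u' + 1) = (u + u' + 1) + 1 := by omega
      have e2 : u + (u' + 1) = u + u' + 1 := by omega
      have e3 : u + 1 + u' = u + u' + 1 := by omega
      rw [e1, e2, e3]
      conv_rhs => rw [List.replicate_succ, shuf_cons, ← List.replicate_succ]
      rw [smul_add, add_assoc, ← add_smul]
      congr 2
termination_by m u u' => m.length + u + u'

/-- Iterated shuffle-with-ones: (k_u)_{u'} = C(u+u', u) · k_{u+u'}. -/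
theorem kU_iterate (k : List ℕ) (hk : 2 ≤ k.length) (u u' : ℕ) :
    kUExt (kU k u) u' = ((u + u').choose u : ℤ) • kU k (u + u') := by
  set h := k.headD 1 with hh
  set t := k.getLastD 1 with ht
  set mid := (k.drop 1).dropLast with hmid
  have hg : Function.Injective (fun m => h :: (m ++ [t]) : List ℕ → List ℕ) := by
    intro x y hxy
    simp only [List.cons.injEq] at hxy
    have := congrArg List.dropLast hxy.2
    simpa using this
  unfold kUExt kU
  rw [Finsupp.sum_mapDomain_index_inj hg]
  have step : ∀ w : List ℕ,
      Finsupp.mapDomain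
          (fun m => (h :: (w ++ [t])).headD 1 :: (m ++ [(h :: (w ++ [t])).getLastD 1]))
          (shuf (((h :: (w ++ [t])).drop 1).dropLast) (List.replicate u' 1)) =
        Finsupp.mapDomain (fun m => h :: (m ++ [t])) (shuf w (List.replicate u' 1)) := by
    intro w
    have h2 : ((h :: (w ++ [t])).drop 1).dropLast = w := by simp
    have h3 : (h :: (w ++ [t])).getLastD 1 = t := by
      rw [show h :: (w ++ [t]) = (h :: w) ++ [t] from rfl, List.getLastD_eq_getLast?,
        List.getLast?_concat]
      rfl
    simp only [List.headD_cons, h2, h3]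
  simp only [step]
  rw [← mapDomain_Fsum]
  have hF : ((shuf mid (List.replicate u 1)).sum fun w c =>
      c • shuf w (List.replicate u' 1)) = F (shuf mid (List.replicate u 1)) u' := rfl
  rw [hF, key, Finsupp.mapDomain_smul]
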